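/- The map D_{(r_1⋯r_a)} → W(P)\S_{r+1} sending a tuple (k_{x_1}, …, k_r) to the left coset W(P) · (Π_2 Π_3 ⋯ Π_a) is a bijection between D_{(r_1⋯r_a)} and the set of left cosets of W(P) in S_{r+1}. -/

import Mathlib

open Equiv Finset

/-- The simple reflection `s i = (i, i+1)` (1-based) in `S_{r+1}`, for `1 ≤ i ≤ r`;
the junk value `1` otherwise. -/
def sr (r i : ℕ) : Equiv.Perm (Fin (r + 1)) :=
  if h : 1 ≤ i ∧ i ≤ r then Equiv.swap ⟨i - 1, by omega⟩ ⟨i, by omega⟩ else 1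

/-- The cycle `π_k` with ambient index `i`, i.e. `s_i s_{i-1} ⋯ s_k`
(the identity when `k = i + 1`). -/
def cyc (r i k : ℕ) : Equiv.Perm (Fin (r + 1)) :=
  ((List.range (i + 1 - k)).map fun t => sr r (i - t)).prod

/-- The product `π_{k i} π_{k (i+1)} ⋯ π_{k j}`, the factor `π_{k t}` being the
cycle with ambient index `t`. -/
def cycProd (r : ℕ) (k : ℕ → ℕ) (i j : ℕ) : Equiv.Perm (Fin (r + 1)) :=
  ((List.range' i (j + 1 - i)).map fun t => cyc r t (k t)).prod

/-- Coxeter length of a permutation: the number of inversions. -/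
def lenInv {n : ℕ} (w : Equiv.Perm (Fin n)) : ℕ :=
  (Finset.univ.filter fun p : Fin n × Fin n => p.1 < p.2 ∧ w p.2 < w p.1).card

/-- Partial sums of a (1-based) composition: `psum c j = c 1 + ⋯ + c j`. -/
def psum (c : ℕ → ℕ) (j : ℕ) : ℕ := ∑ i ∈ Finset.Icc 1 j, c i

/-- The transpose partition of `(t 1, …, t b)`: `transp b t j = #{i ∈ [1,b] : t i ≥ j}`. -/
def transp (b : ℕ) (t : ℕ → ℕ) (j : ℕ) : ℕ :=
  ((Finset.Icc 1 b).filter fun i => j ≤ t i).card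

/-- The element of `Fin (r+1)` with value `i` (for `i ≤ r`). -/
def finOf (r i : ℕ) : Fin (r + 1) := ⟨min i r, by omega⟩

/-- `w(α_i)` is a positive root, where `α_i = e_i − e_{i+1}` (1-based), i.e. the
0-based pair `(i-1, i)`; `w(e_c − e_d) = e_{w c} − e_{w d}` is positive iff `w c < w d`. -/
def posRoot (r : ℕ) (w : Equiv.Perm (Fin (r + 1))) (i : ℕ) : Prop :=
  (w (finOf r (i - 1)) : ℕ) < w (finOf r i)

/-- `w(α_i)` is a negative root. -/
def negRoot (r : ℕ) (w : Equiv.Perm (Fin (r + 1))) (i : ℕ) : Prop :=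
  (w (finOf r i) : ℕ) < w (finOf r (i - 1))

/-- `w(α_i)` is a simple root. -/
def simpleRoot (r : ℕ) (w : Equiv.Perm (Fin (r + 1))) (i : ℕ) : Prop :=
  (w (finOf r i) : ℕ) = (w (finOf r (i - 1)) : ℕ) + 1

/-- `w(α_i) = α_j` (as roots: the image pair is `(j-1, j)` in 0-based indices). -/
def eqRoot (r : ℕ) (w : Equiv.Perm (Fin (r + 1))) (i j : ℕ) : Prop :=
  (w (finOf r (i - 1)) : ℕ) = j - 1 ∧ (w (finOf r i) : ℕ) = j

/-- `Π_l Π_{l+1} ⋯ Π_a` for the composition `c` and tuple `k`, where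
`Π_j = π_{k_{x_{j-1}}} ⋯ π_{k_{x_j - 1}}` and `x_j = psum c j`. -/
def tailProd (r a : ℕ) (c k : ℕ → ℕ) (l : ℕ) : Equiv.Perm (Fin (r + 1)) :=
  ((List.range' l (a + 1 - l)).map fun j => cycProd r k (psum c (j - 1)) (psum c j - 1)).prod

/-- The subgroup `W(P)`: generated by the simple reflections `s i` with `i ∈ [1,r]`
avoiding the partial sums `x 1, …, x (a-1)` of the composition `c`. -/
def WP (r a : ℕ) (c : ℕ → ℕ) : Subgroup (Equiv.Perm (Fin (r + 1))) :=
  Subgroup.closure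
    {g | ∃ i, 1 ≤ i ∧ i ≤ r ∧ (∀ j, 1 ≤ j → j ≤ a - 1 → i ≠ psum c j) ∧ g = sr r i}

/-- `α_i ∈ Δ_λ` for the composition `λ = (p 1, …, p m)` of `r+1`. -/
def inDelta (r m : ℕ) (p : ℕ → ℕ) (i : ℕ) : Prop :=
  1 ≤ i ∧ i ≤ r ∧ ∀ j, 1 ≤ j → j ≤ m - 1 → i ≠ psum p j

/-- The left coset `H · g`. -/
def cosetOf {G : Type*} [Group G] (H : Subgroup G) (g : G) : Set G :=
  {x | ∃ h ∈ H, x = h * g}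

/-- The (0-based) positions `u` and `v` lie in the same block of the composition
`μ^⊤ = transp b t`; a negative root `e_c − e_d` lies in `Φ⁻_{μ^⊤}` iff its two
indices lie in the same block. -/
def sameBlock (b : ℕ) (t : ℕ → ℕ) (u v : ℕ) : Prop :=
  ∃ j, 1 ≤ j ∧ j ≤ t 1 ∧
    psum (transp b t) (j - 1) ≤ u ∧ u < psum (transp b t) j ∧
    psum (transp b t) (j - 1) ≤ v ∧ v < psum (transp b t) j

def blkf (c : ℕ → ℕ) (a q : ℕ) : ℕ :=
  1 + ((Finset.Icc 1 (a-1)).filter (fun j => psum c j ≤ q)).card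

lemma sr_apply (r i : ℕ) (h1 : 1 ≤ i) (h2 : i ≤ r) (p : Fin (r+1)) :
    ((sr r i p : Fin (r+1)) : ℕ) =
      if (p:ℕ) = i - 1 then i else if (p:ℕ) = i then i - 1 else p := by
  rw [sr, dif_pos ⟨h1, h2⟩, Equiv.swap_apply_def]
  simp only [Fin.ext_iff]
  split_ifs <;> simp_all
lemma sr_fix (r i : ℕ) (p : Fin (r+1)) (h1 : (p:ℕ) ≠ i - 1) (h2 : (p:ℕ) ≠ i) :
    sr r i p = p := by
  rw [sr]
  split_ifs with h
  · exact Equiv.swap_apply_of_ne_of_ne (by simp [Fin.ext_iff]; omega) (by simp [Fin.ext_iff]; omega)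
  · rfl
lemma prod_fix {n : ℕ} (l : List (Equiv.Perm (Fin n))) (p : Fin n)
    (h : ∀ g ∈ l, g p = p) : l.prod p = p := by
  induction l with
  | nil => rfl
  | cons g l ih =>
    simp only [List.prod_cons, Equiv.Perm.mul_apply]
    rw [ih (fun g hg => h g (List.mem_cons_of_mem _ hg)), h g List.mem_cons_self]
lemma cyc_fix (r i k : ℕ) (p : Fin (r+1)) (h : i < (p:ℕ)) : cyc r i k p = p := by
  apply prod_fix
  intro g hg
  simp only [List.mem_map, List.mem_range] at hg
  obtain ⟨t, _, rfl⟩ := hg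
  exact sr_fix r (i - t) p (by omega) (by omega)
lemma cyc_succ (r i k : ℕ) (hk1 : 1 ≤ k) (hk : k ≤ i) : cyc r i k = sr r i * cyc r (i-1) k := by
  rw [cyc, cyc]
  have h1 : i + 1 - k = (i - k) + 1 := by omega
  have h2 : i - 1 + 1 - k = i - k := by omega
  rw [h1, h2, List.range_succ_eq_map, List.map_cons, List.prod_cons, Nat.sub_zero, List.map_map]
  congr 1
  congr 1
  apply List.map_congr_left
  intro t _
  simp only [Function.comp_apply]
  congr 1
  omega

lemma cyc_apply (r i k : ℕ) (h1 : 1 ≤ k) (h2 : k ≤ i + 1) (h3 : i ≤ r) (p : Fin (r+1)) :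
    ((cyc r i k p : Fin (r+1)) : ℕ) =
      if (p:ℕ) = k - 1 then i
      else if k ≤ (p:ℕ) ∧ (p:ℕ) ≤ i then (p:ℕ) - 1 else (p:ℕ) := by
  induction i with
  | zero =>
    have hk1 : k = 1 := by omega
    have : cyc r 0 k = 1 := by rw [cyc]; subst hk1; simp
    rw [this]
    simp only [Equiv.Perm.one_apply]
    split_ifs <;> omega
  | succ i ih =>
    rcases Nat.lt_or_ge (i+1) k with hlt | hge
    · have : cyc r (i+1) k = 1 := by
        rw [cyc]
        have : i + 1 + 1 - k = 0 := by omega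
        rw [this]; simp
      rw [this]
      simp only [Equiv.Perm.one_apply]
      have hple : (p:ℕ) ≤ r := by omega
      split_ifs <;> omega
    · rw [cyc_succ r (i+1) k h1 hge]
      simp only [Equiv.Perm.mul_apply, Nat.add_sub_cancel]
      have hq := ih (by omega) (by omega)
      rw [sr_apply r (i+1) (by omega) h3, hq]
      have hple : (p:ℕ) ≤ r := by omega
      split_ifs <;> omega

-- cycProd lemmas
lemma cycProd_empty (r : ℕ) (k : ℕ → ℕ) (i j : ℕ) (h : j + 1 ≤ i) : cycProd r k i j = 1 := by
  rw [cycProd]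
  have : j + 1 - i = 0 := by omega
  rw [this]; simp

lemma cycProd_concat (r : ℕ) (k : ℕ → ℕ) (i j : ℕ) (h : i ≤ j) (hj : 1 ≤ j) :
    cycProd r k i j = cycProd r k i (j-1) * cyc r j (k j) := by
  rw [cycProd, cycProd]
  have h1 : j + 1 - i = (j - i) + 1 := by omega
  have h2 : j - 1 + 1 - i = j - i := by omega
  rw [h1, h2, List.range'_1_concat, List.map_append, List.prod_append]
  have h3 : i + (j - i) = j := by omega
  rw [h3]
  simp

lemma cycProd_fix (r : ℕ) (k : ℕ → ℕ) (i j : ℕ) (p : Fin (r+1)) (h : j < (p:ℕ)) :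
    cycProd r k i j p = p := by
  apply prod_fix
  intro g hg
  simp only [List.mem_map, List.mem_range'_1] at hg
  obtain ⟨t, ht, rfl⟩ := hg
  exact cyc_fix r t (k t) p (by omega)

lemma cycProd_congr (r : ℕ) (k k' : ℕ → ℕ) (i j : ℕ) (h : ∀ t, i ≤ t → t ≤ j → k t = k' t) :
    cycProd r k i j = cycProd r k' i j := by
  rw [cycProd, cycProd]
  congr 1
  apply List.map_congr_left
  intro t ht
  simp only [List.mem_range'_1] at ht
  rw [h t (by omega) (by omega)]

-- tailProd lemmas
lemma tailProd_one (r : ℕ) (c k : ℕ → ℕ) : tailProd r 1 c k 2 = 1 := by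
  rw [tailProd]; simp

lemma tailProd_concat (r a : ℕ) (c k : ℕ → ℕ) (ha : 2 ≤ a) :
    tailProd r a c k 2 = tailProd r (a-1) c k 2 *
      cycProd r k (psum c (a-1)) (psum c a - 1) := by
  rw [tailProd, tailProd]
  have h1 : a + 1 - 2 = (a - 2) + 1 := by omega
  have h2 : a - 1 + 1 - 2 = a - 2 := by omega
  rw [h1, h2, List.range'_1_concat, List.map_append, List.prod_append]
  have h3 : 2 + (a - 2) = a := by omega
  rw [h3]
  simp

lemma tailProd_congr (r a : ℕ) (c k k' : ℕ → ℕ)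
    (h : ∀ t, t ≤ psum c a - 1 → k t = k' t) (hmono : Monotone (psum c)) :
    tailProd r a c k 2 = tailProd r a c k' 2 := by
  rw [tailProd, tailProd]
  congr 1
  apply List.map_congr_left
  intro j hj
  simp only [List.mem_range'_1] at hj
  apply cycProd_congr
  intro t _ ht2
  apply h
  have : psum c j ≤ psum c a := hmono (by omega)
  omega

lemma psum_mono (c : ℕ → ℕ) : Monotone (psum c) := by
  intro i j hij
  apply Finset.sum_le_sum_of_subset
  intro t ht
  simp only [Finset.mem_Icc] at *
  omega

lemma psum_succ (c : ℕ → ℕ) (j : ℕ) : psum c (j+1) = psum c j + c (j+1) := by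
  rw [psum, psum, Finset.sum_Icc_succ_top (by omega)]

lemma tailProd_fix (r a : ℕ) (c k : ℕ → ℕ) (hc : ∀ j, 1 ≤ j → j ≤ a → 1 ≤ c j)
    (p : Fin (r+1)) (h : psum c a ≤ (p:ℕ)) : tailProd r a c k 2 p = p := by
  rw [tailProd]
  apply prod_fix
  intro g hg
  simp only [List.mem_map, List.mem_range'_1] at hg
  obtain ⟨j, hj, rfl⟩ := hg
  apply cycProd_fix
  have h1 : psum c j ≤ psum c a := psum_mono c (by omega)
  have h2 : 1 ≤ c j := hc j (by omega) (by omega)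
  have h3 : psum c j = psum c (j-1) + c j := by
    have := psum_succ c (j-1)
    have hj1 : j - 1 + 1 = j := by omega
    rw [hj1] at this
    exact this
  omega

lemma psum_zero (c : ℕ → ℕ) : psum c 0 = 0 := by rw [psum]; simp

lemma psum_pred (c : ℕ → ℕ) (j : ℕ) (hj : 1 ≤ j) : psum c j = psum c (j-1) + c j := by
  have := psum_succ c (j-1)
  have h1 : j - 1 + 1 = j := by omega
  rw [h1] at this
  exact this

lemma blkf_pos (c : ℕ → ℕ) (a q : ℕ) : 1 ≤ blkf c a q := by rw [blkf]; omega

lemma blkf_le (c : ℕ → ℕ) (a q : ℕ) (ha : 1 ≤ a) : blkf c a q ≤ a := by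
  rw [blkf]
  have := Finset.card_filter_le (Finset.Icc 1 (a-1)) (fun j => psum c j ≤ q)
  simp only [Nat.card_Icc] at this
  omega

lemma blkf_mono (c : ℕ → ℕ) (a : ℕ) {q q' : ℕ} (h : q ≤ q') : blkf c a q ≤ blkf c a q' := by
  rw [blkf, blkf]
  have : ((Finset.Icc 1 (a-1)).filter (fun j => psum c j ≤ q)) ⊆
      ((Finset.Icc 1 (a-1)).filter (fun j => psum c j ≤ q')) := by
    intro t ht
    simp only [Finset.mem_filter] at *
    exact ⟨ht.1, le_trans ht.2 h⟩
  have := Finset.card_le_card this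
  omega

lemma blkf_of_mem (c : ℕ → ℕ) (a j q : ℕ) (h1 : 1 ≤ j) (h2 : j ≤ a)
    (h3 : psum c (j-1) ≤ q) (h4 : q < psum c j) : blkf c a q = j := by
  rw [blkf]
  have : ((Finset.Icc 1 (a-1)).filter (fun j => psum c j ≤ q)) = Finset.Icc 1 (j-1) := by
    ext t
    simp only [Finset.mem_filter, Finset.mem_Icc]
    constructor
    · rintro ⟨⟨ht1, ht2⟩, ht3⟩
      refine ⟨ht1, ?_⟩
      by_contra hc
      have : psum c j ≤ psum c t := psum_mono c (by omega)
      omega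
    · rintro ⟨ht1, ht2⟩
      have : psum c t ≤ psum c (j-1) := psum_mono c ht2
      exact ⟨⟨ht1, by omega⟩, by omega⟩
  rw [this, Nat.card_Icc]
  omega

lemma blkf_mem (c : ℕ → ℕ) (a q : ℕ) (hq : q < psum c a) :
    psum c (blkf c a q - 1) ≤ q ∧ q < psum c (blkf c a q) := by
  set S := ((Finset.Icc 1 (a-1)).filter (fun j => psum c j ≤ q)) with hS
  set m := S.card with hm
  have hma : m ≤ a - 1 := by
    rw [hm, hS]
    have := Finset.card_filter_le (Finset.Icc 1 (a-1)) (fun j => psum c j ≤ q)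
    simp only [Nat.card_Icc] at this
    omega
  have hblk : blkf c a q = 1 + m := rfl
  have hsub : ∀ t, 1 ≤ t → t ≤ m → psum c t ≤ q := by
    intro t ht1 ht2
    by_contra hcon
    -- then S ⊆ Icc 1 (t-1)
    have hsubS : S ⊆ Finset.Icc 1 (t-1) := by
      intro s hs
      simp only [hS, Finset.mem_filter, Finset.mem_Icc] at hs
      simp only [Finset.mem_Icc]
      have : ¬ (t ≤ s) := by
        intro hts
        have : psum c t ≤ psum c s := psum_mono c hts
        omega
      omega
    have := Finset.card_le_card hsubS
    simp only [Nat.card_Icc] at this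
    omega
  constructor
  · rcases Nat.eq_zero_or_pos m with h0 | hpos
    · rw [hblk, h0]
      simp [psum_zero]
    · rw [hblk]
      have : 1 + m - 1 = m := by omega
      rw [this]
      exact hsub m hpos le_rfl
  · rw [hblk]
    by_contra hcon
    push_neg at hcon
    -- psum c (1+m) ≤ q; then 1+m ∈ S unless 1+m > a-1
    rcases Nat.lt_or_ge (a-1) (1+m) with hgt | hle
    · -- m = a - 1, blkf = a, psum c a > q contra using mono
      have hma' : m = a - 1 := by omega
      have : psum c a ≤ psum c (1+m) := by
        apply psum_mono
        omega
      omega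
    · have hmem : (1+m) ∈ S := by
        simp only [hS, Finset.mem_filter, Finset.mem_Icc]
        exact ⟨⟨by omega, by omega⟩, hcon⟩
      -- but then Icc 1 (m+1) ⊆ S, so card ≥ m+1, contra
      have hsubS : Finset.Icc 1 (m+1) ⊆ S := by
        intro t ht
        simp only [Finset.mem_Icc] at ht
        simp only [hS, Finset.mem_filter, Finset.mem_Icc]
        refine ⟨⟨ht.1, by omega⟩, ?_⟩
        have : psum c t ≤ psum c (1+m) := psum_mono c (by omega)
        omega
      have := Finset.card_le_card hsubS
      simp only [Nat.card_Icc] at this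
      omega

lemma blkf_eq_a_iff (c : ℕ → ℕ) (a q : ℕ) (ha : 1 ≤ a) :
    blkf c a q = a ↔ psum c (a-1) ≤ q := by
  constructor
  · intro h
    rcases Nat.eq_or_lt_of_le ha with h1 | h1
    · rw [← h1]
      simp [psum_zero]
    · -- a ≥ 2; card = a-1 forces filter = Icc, so a-1 in filter
      rw [blkf] at h
      have hcard : ((Finset.Icc 1 (a-1)).filter (fun j => psum c j ≤ q)).card = a - 1 := by omega
      have heq : ((Finset.Icc 1 (a-1)).filter (fun j => psum c j ≤ q)) = Finset.Icc 1 (a-1) := by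
        apply Finset.eq_of_subset_of_card_le (Finset.filter_subset _ _)
        rw [hcard, Nat.card_Icc]
        omega
      have : (a-1) ∈ ((Finset.Icc 1 (a-1)).filter (fun j => psum c j ≤ q)) := by
        rw [heq]
        simp only [Finset.mem_Icc]
        omega
      simp only [Finset.mem_filter] at this
      exact this.2
  · intro h
    rw [blkf]
    have heq : ((Finset.Icc 1 (a-1)).filter (fun j => psum c j ≤ q)) = Finset.Icc 1 (a-1) := by
      apply Finset.eq_of_subset_of_card_le (Finset.filter_subset _ _)
      apply Finset.card_le_card
      intro t ht
      simp only [Finset.mem_Icc] at ht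
      simp only [Finset.mem_filter, Finset.mem_Icc]
      exact ⟨ht, le_trans (psum_mono c ht.2) h⟩
    rw [heq, Nat.card_Icc]
    omega

lemma blkf_trunc (c : ℕ → ℕ) (a q : ℕ) (ha : 2 ≤ a) (hq : q < psum c (a-1)) :
    blkf c a q = blkf c (a-1) q := by
  rw [blkf, blkf]
  congr 1
  congr 1
  ext t
  simp only [Finset.mem_filter, Finset.mem_Icc]
  constructor
  · rintro ⟨⟨ht1, ht2⟩, ht3⟩
    refine ⟨⟨ht1, ?_⟩, ht3⟩
    by_contra hcon
    have hta : t = a - 1 := by omega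
    rw [hta] at ht3
    omega
  · rintro ⟨⟨ht1, ht2⟩, ht3⟩
    exact ⟨⟨ht1, by omega⟩, ht3⟩

lemma perm_lt {n x : ℕ} (u : Equiv.Perm (Fin n)) (hu : ∀ m : Fin n, x ≤ (m:ℕ) → u m = m)
    (q : Fin n) (hq : (q:ℕ) < x) : ((u q : Fin n) : ℕ) < x := by
  by_contra hcon
  push_neg at hcon
  have h1 : u (u q) = u q := hu (u q) hcon
  have := u.injective h1
  rw [this] at hcon
  omega

lemma blkf_one (c : ℕ → ℕ) (q : ℕ) : blkf c 1 q = 1 := by rw [blkf]; simp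

lemma cycProd_single (r : ℕ) (k : ℕ → ℕ) (i : ℕ) : cycProd r k i i = cyc r i (k i) := by
  rw [cycProd]
  have : i + 1 - i = 1 := by omega
  rw [this]
  simp

lemma kchain (k : ℕ → ℕ) (i0 i1 : ℕ) (hmono : ∀ i, i0 ≤ i → i + 1 ≤ i1 → k i < k (i+1)) :
    ∀ j i, i0 ≤ i → i < j → j ≤ i1 → k i < k j := by
  intro j
  induction j with
  | zero => omega
  | succ j ih =>
    intro i h1 h2 h3
    rcases Nat.lt_or_ge i j with h4 | h4
    · exact lt_trans (ih i h1 h4 (by omega)) (hmono j (by omega) h3)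
    · have : i = j := by omega
      subst this
      exact hmono i h1 h3

lemma seg (r i0 : ℕ) (k : ℕ → ℕ) :
    ∀ n i1, i1 + 1 - i0 = n → i1 ≤ r →
    (∀ i, i0 ≤ i → i ≤ i1 → 1 ≤ k i ∧ k i ≤ i + 1) →
    (∀ i, i0 ≤ i → i + 1 ≤ i1 → k i < k (i+1)) →
    (∀ p : Fin (r+1), ∀ i, i0 ≤ i → i ≤ i1 → (p:ℕ) = k i - 1 →
        ((cycProd r k i0 i1 p : Fin (r+1)) : ℕ) = i) ∧
    (∀ p : Fin (r+1), (p:ℕ) ≤ i1 → (∀ i, i0 ≤ i → i ≤ i1 → (p:ℕ) ≠ k i - 1) →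
        ((cycProd r k i0 i1 p : Fin (r+1)) : ℕ) < i0) ∧
    (∀ p q : Fin (r+1), (p:ℕ) < (q:ℕ) → (q:ℕ) ≤ i1 →
        (∀ i, i0 ≤ i → i ≤ i1 → (p:ℕ) ≠ k i - 1) →
        (∀ i, i0 ≤ i → i ≤ i1 → (q:ℕ) ≠ k i - 1) →
        ((cycProd r k i0 i1 p : Fin (r+1)) : ℕ) < ((cycProd r k i0 i1 q : Fin (r+1)) : ℕ)) := by
  intro n
  induction n with
  | zero =>
    intro i1 hn hr1 hb hmono
    have hempty : cycProd r k i0 i1 = 1 := cycProd_empty r k i0 i1 (by omega)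
    rw [hempty]
    refine ⟨?_, ?_, ?_⟩
    · intro p i hi1 hi2 _; omega
    · intro p hp _; simp only [Equiv.Perm.one_apply]; omega
    · intro p q hpq _ _ _; simp only [Equiv.Perm.one_apply]; exact hpq
  | succ n ih =>
    intro i1 hn hr1 hb hmono
    have hi01 : i0 ≤ i1 := by omega
    have hK := hb i1 hi01 le_rfl
    rcases Nat.eq_or_lt_of_le hi01 with heq | hlt
    · -- single cycle case i0 = i1
      have hsing : cycProd r k i0 i1 = cyc r i1 (k i1) := by
        rw [← heq]
        exact cycProd_single r k i0
      rw [hsing]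
      refine ⟨?_, ?_, ?_⟩
      · intro p i hi1 hi2 hp
        have hii : i = i1 := by omega
        subst hii
        rw [cyc_apply r i (k i) hK.1 hK.2 hr1, if_pos hp]
      · intro p hp hne
        have hne0 := hne i1 hi01 le_rfl
        rw [cyc_apply r i1 (k i1) hK.1 hK.2 hr1]
        split_ifs <;> omega
      · intro p q hpq hq hnep hneq
        have hne0p := hnep i1 hi01 le_rfl
        have hne0q := hneq i1 hi01 le_rfl
        rw [cyc_apply r i1 (k i1) hK.1 hK.2 hr1, cyc_apply r i1 (k i1) hK.1 hK.2 hr1]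
        have hple : (p:ℕ) < i1 + 1 := by omega
        split_ifs <;> omega
    · -- i0 < i1: peel last cycle
      have hi11 : 1 ≤ i1 := by omega
      obtain ⟨IHa, IHb, IHc⟩ := ih (i1-1) (by omega) (by omega)
        (fun i h1 h2 => hb i h1 (by omega)) (fun i h1 h2 => hmono i h1 (by omega))
      have hconc := cycProd_concat r k i0 i1 hi01 hi11
      have hchain := kchain k i0 i1 hmono
      have happ : ∀ p : Fin (r+1), ((cyc r i1 (k i1) p : Fin (r+1)) : ℕ) =
          if (p:ℕ) = k i1 - 1 then i1
          else if k i1 ≤ (p:ℕ) ∧ (p:ℕ) ≤ i1 then (p:ℕ) - 1 else (p:ℕ) :=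
        cyc_apply r i1 (k i1) hK.1 hK.2 hr1
      refine ⟨?_, ?_, ?_⟩
      · intro p i hi1' hi2 hp
        rw [hconc]
        simp only [Equiv.Perm.mul_apply]
        rcases Nat.eq_or_lt_of_le hi2 with hii | hii
        · -- i = i1
          subst hii
          have hcp : ((cyc r i (k i) p : Fin (r+1)) : ℕ) = i := by rw [happ, if_pos hp]
          have := cycProd_fix r k i0 (i-1) (cyc r i (k i) p) (by omega)
          rw [this, hcp]
        · -- i < i1
          have hki : k i < k i1 := hchain i1 i hi1' hii le_rfl
          have hkip := (hb i hi1' (by omega)).1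
          have hcp : cyc r i1 (k i1) p = p := by
            have h1 : (p:ℕ) ≠ k i1 - 1 := by omega
            have h2 : ¬ (k i1 ≤ (p:ℕ) ∧ (p:ℕ) ≤ i1) := by omega
            have := happ p
            rw [if_neg h1, if_neg h2] at this
            exact Fin.ext this
          rw [hcp]
          exact IHa p i hi1' (by omega) hp
      · intro p hp hne
        rw [hconc]
        simp only [Equiv.Perm.mul_apply]
        have hne1 := hne i1 hi01 le_rfl
        rcases Nat.lt_or_ge (p:ℕ) (k i1) with hlt2 | hge2
        · have hcp : cyc r i1 (k i1) p = p := by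
            have h2 : ¬ (k i1 ≤ (p:ℕ) ∧ (p:ℕ) ≤ i1) := by omega
            have := happ p
            rw [if_neg hne1, if_neg h2] at this
            exact Fin.ext this
          rw [hcp]
          exact IHb p (by omega) (fun i h1 h2 => hne i h1 (by omega))
        · have hcp : ((cyc r i1 (k i1) p : Fin (r+1)) : ℕ) = (p:ℕ) - 1 := by
            rw [happ, if_neg hne1, if_pos ⟨hge2, hp⟩]
          apply IHb _ (by omega)
          intro i h1 h2
          rw [hcp]
          intro hcon
          -- p - 1 = k i - 1 with p ≥ k i1 ≥ 1, so p = k i, but k i < k i1 ≤ p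
          have hki : k i < k i1 := hchain i1 i h1 (by omega) le_rfl
          have := (hb i h1 (by omega)).1
          omega
      · intro p q hpq hq hnep hneq
        rw [hconc]
        simp only [Equiv.Perm.mul_apply]
        have hnep1 := hnep i1 hi01 le_rfl
        have hneq1 := hneq i1 hi01 le_rfl
        have hkipos : ∀ i, i0 ≤ i → i ≤ i1 → 1 ≤ k i := fun i h1 h2 => (hb i h1 h2).1
        have havoid : ∀ (x : Fin (r+1)), (x:ℕ) ≤ i1 → (∀ i, i0 ≤ i → i ≤ i1 → (x:ℕ) ≠ k i - 1) →
            ((cyc r i1 (k i1) x : Fin (r+1)) : ℕ) ≤ i1 - 1 ∧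
            (∀ i, i0 ≤ i → i ≤ i1 - 1 → ((cyc r i1 (k i1) x : Fin (r+1)) : ℕ) ≠ k i - 1) := by
          intro x hx hnx
          have hnx1 := hnx i1 hi01 le_rfl
          rcases Nat.lt_or_ge (x:ℕ) (k i1) with hlt2 | hge2
          · have hcx : ((cyc r i1 (k i1) x : Fin (r+1)) : ℕ) = (x:ℕ) := by
              rw [happ, if_neg hnx1, if_neg (by omega)]
            rw [hcx]
            exact ⟨by omega, fun i h1 h2 => hnx i h1 (by omega)⟩
          · have hcx : ((cyc r i1 (k i1) x : Fin (r+1)) : ℕ) = (x:ℕ) - 1 := by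
              rw [happ, if_neg hnx1, if_pos ⟨hge2, hx⟩]
            rw [hcx]
            refine ⟨by omega, fun i h1 h2 hcon => ?_⟩
            have hki : k i < k i1 := hchain i1 i h1 (by omega) le_rfl
            have := hkipos i h1 (by omega)
            omega
        have hap := havoid p (by omega) hnep
        have haq := havoid q hq hneq
        apply IHc _ _ ?_ haq.1 hap.2 haq.2
        -- order preservation of the last cycle on the two points
        rcases Nat.lt_or_ge (p:ℕ) (k i1) with hltp | hgep <;>
          rcases Nat.lt_or_ge (q:ℕ) (k i1) with hltq | hgeq
        · have hcp : ((cyc r i1 (k i1) p : Fin (r+1)) : ℕ) = (p:ℕ) := by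
            rw [happ, if_neg hnep1, if_neg (by omega)]
          have hcq : ((cyc r i1 (k i1) q : Fin (r+1)) : ℕ) = (q:ℕ) := by
            rw [happ, if_neg hneq1, if_neg (by omega)]
          omega
        · have hcp : ((cyc r i1 (k i1) p : Fin (r+1)) : ℕ) = (p:ℕ) := by
            rw [happ, if_neg hnep1, if_neg (by omega)]
          have hcq : ((cyc r i1 (k i1) q : Fin (r+1)) : ℕ) = (q:ℕ) - 1 := by
            rw [happ, if_neg hneq1, if_pos ⟨hgeq, hq⟩]
          omega
        · omega
        · have hcp : ((cyc r i1 (k i1) p : Fin (r+1)) : ℕ) = (p:ℕ) - 1 := by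
            rw [happ, if_neg hnep1, if_pos ⟨hgep, by omega⟩]
          have hcq : ((cyc r i1 (k i1) q : Fin (r+1)) : ℕ) = (q:ℕ) - 1 := by
            rw [happ, if_neg hneq1, if_pos ⟨hgeq, hq⟩]
          omega

-- no-boundary: blkf constant across i-1, i
lemma blkf_step (c : ℕ → ℕ) (a i : ℕ) (hi : 1 ≤ i)
    (hnb : ∀ j, 1 ≤ j → j ≤ a - 1 → i ≠ psum c j) : blkf c a (i-1) = blkf c a i := by
  rw [blkf, blkf]
  congr 2
  ext t
  simp only [Finset.mem_filter, Finset.mem_Icc]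
  constructor
  · rintro ⟨ht, h⟩; exact ⟨ht, by omega⟩
  · rintro ⟨ht, h⟩
    refine ⟨ht, ?_⟩
    have := hnb t ht.1 ht.2
    omega

lemma blkf_ge_of_psum_le (c : ℕ → ℕ) (a j m : ℕ) (h1 : 1 ≤ j) (h2 : j ≤ a - 1)
    (h3 : psum c j ≤ m) : j + 1 ≤ blkf c a m := by
  rw [blkf]
  have hsub : Finset.Icc 1 j ⊆ (Finset.Icc 1 (a-1)).filter (fun t => psum c t ≤ m) := by
    intro t ht
    simp only [Finset.mem_Icc] at ht
    simp only [Finset.mem_filter, Finset.mem_Icc]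
    exact ⟨⟨ht.1, by omega⟩, le_trans (psum_mono c ht.2) h3⟩
  have := Finset.card_le_card hsub
  rw [Nat.card_Icc] at this
  omega

-- descent lemma: multiplying by adjacent transposition at a descent reduces lenInv
lemma lenInv_descent {n : ℕ} (h : Equiv.Perm (Fin n)) (p q : Fin n)
    (hq : (q:ℕ) = (p:ℕ) + 1) (hd : ((h q : Fin n):ℕ) < ((h p : Fin n):ℕ)) :
    lenInv (h * Equiv.swap p q) < lenInv h := by
  set s := Equiv.swap p q with hs
  have hsp : s p = q := Equiv.swap_apply_left p q
  have hsq : s q = p := Equiv.swap_apply_right p q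
  have hpq : p < q := by rw [Fin.lt_def]; omega
  have hmem : (p, q) ∈ Finset.univ.filter
      (fun x : Fin n × Fin n => x.1 < x.2 ∧ h x.2 < h x.1) := by
    simp only [Finset.mem_filter, Finset.mem_univ, true_and]
    exact ⟨hpq, by rw [Fin.lt_def]; exact hd⟩
  have key : ∀ u v : Fin n, u < v → ¬(u = p ∧ v = q) → s u < s v := by
    intro u v huv hne
    have hval : ¬((u:ℕ) = (p:ℕ) ∧ (v:ℕ) = (q:ℕ)) := by
      intro hcon; exact hne ⟨Fin.ext hcon.1, Fin.ext hcon.2⟩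
    rw [Fin.lt_def] at huv ⊢
    rw [hs, Equiv.swap_apply_def, Equiv.swap_apply_def]
    simp only [apply_ite (Fin.val : Fin n → ℕ), Fin.ext_iff]
    split_ifs <;> omega
  have hinj : ∀ x ∈ Finset.univ.filter
      (fun x : Fin n × Fin n => x.1 < x.2 ∧ (h * s) x.2 < (h * s) x.1),
      (s x.1, s x.2) ∈ (Finset.univ.filter
      (fun x : Fin n × Fin n => x.1 < x.2 ∧ h x.2 < h x.1)).erase (p, q) := by
    intro x hx
    rw [Finset.mem_filter] at hx
    simp only [Finset.mem_filter, Finset.mem_univ, true_and, Equiv.Perm.mul_apply] at hx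
    obtain ⟨hlt, hinv⟩ := hx
    have hnepq : ¬(x.1 = p ∧ x.2 = q) := by
      rintro ⟨h1, h2⟩
      rw [h1, h2, hsp, hsq] at hinv
      rw [Fin.lt_def] at hinv
      omega
    have hor : s x.1 < s x.2 := key x.1 x.2 hlt hnepq
    simp only [Finset.mem_erase, Finset.mem_filter, Finset.mem_univ, true_and]
    refine ⟨?_, hor, hinv⟩
    intro hcon
    rw [Prod.mk.injEq] at hcon
    have h1 : x.1 = s p := by rw [← hcon.1]; simp [hs]
    have h2 : x.2 = s q := by rw [← hcon.2]; simp [hs]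
    rw [hsp] at h1; rw [hsq] at h2
    rw [h1, h2, Fin.lt_def] at hlt
    omega
  have hcard : (Finset.univ.filter
      (fun x : Fin n × Fin n => x.1 < x.2 ∧ (h * s) x.2 < (h * s) x.1)).card ≤
      ((Finset.univ.filter
      (fun x : Fin n × Fin n => x.1 < x.2 ∧ h x.2 < h x.1)).erase (p, q)).card := by
    apply Finset.card_le_card_of_injOn _ hinj
    intro x _ y _ hxy
    rw [Prod.mk.injEq] at hxy
    have h1 := s.injective hxy.1
    have h2 := s.injective hxy.2
    exact Prod.ext h1 h2
  have herase := Finset.card_erase_of_mem hmem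
  have hpos : 0 < (Finset.univ.filter
      (fun x : Fin n × Fin n => x.1 < x.2 ∧ h x.2 < h x.1)).card :=
    Finset.card_pos.mpr ⟨(p,q), hmem⟩
  rw [lenInv, lenInv]
  omega

-- strictly increasing permutation is identity
lemma perm_eq_one_of_no_descent {n : ℕ} (h : Equiv.Perm (Fin n))
    (hd : ∀ p q : Fin n, (q:ℕ) = (p:ℕ) + 1 → ((h p : Fin n):ℕ) < ((h q : Fin n):ℕ)) :
    h = 1 := by
  have hle : ∀ m : ℕ, ∀ p : Fin n, (p:ℕ) ≤ m → (p:ℕ) ≤ ((h p : Fin n):ℕ) := by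
    intro m
    induction m with
    | zero => intro p hp; omega
    | succ m ih =>
      intro p hp
      rcases Nat.lt_or_ge (p:ℕ) (m+1) with hlt | hge
      · exact ih p (by omega)
      · have hpv : (p:ℕ) = m + 1 := by omega
        have hmn : m < n := by omega
        have hv : ((⟨m, hmn⟩ : Fin n) : ℕ) = m := rfl
        have h1 := ih ⟨m, hmn⟩ (by omega)
        have h2 := hd ⟨m, hmn⟩ p (by rw [hv]; omega)
        omega
  have hsum : ∑ p : Fin n, ((h p : Fin n):ℕ) = ∑ p : Fin n, (p:ℕ) :=
    Equiv.sum_comp h (fun x : Fin n => (x:ℕ))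
  have hall : ∀ p : Fin n, (p:ℕ) = ((h p : Fin n):ℕ) := by
    intro p
    have := (Finset.sum_eq_sum_iff_of_le
      (fun i (_ : i ∈ Finset.univ) => hle n i (by omega))).mp hsum.symm
    exact this p (Finset.mem_univ p)
  ext p
  exact (hall p).symm

-- generators of WP preserve blkf
lemma sr_blkf (r a i : ℕ) (c : ℕ → ℕ) (h1 : 1 ≤ i) (h2 : i ≤ r)
    (hnb : ∀ j, 1 ≤ j → j ≤ a - 1 → i ≠ psum c j) (p : Fin (r+1)) :
    blkf c a ((sr r i p : Fin (r+1)) : ℕ) = blkf c a (p:ℕ) := by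
  rw [sr_apply r i h1 h2]
  have hstep := blkf_step c a i h1 hnb
  split_ifs with ha hb
  · rw [← ha] at hstep; rw [hstep]
  · rw [hb, hstep]
  · rfl

lemma WP_blkf (r a : ℕ) (c : ℕ → ℕ) (h : Equiv.Perm (Fin (r+1))) (hm : h ∈ WP r a c) :
    ∀ p : Fin (r+1), blkf c a ((h p : Fin (r+1)) : ℕ) = blkf c a (p:ℕ) := by
  induction hm using Subgroup.closure_induction with
  | mem x hx =>
    obtain ⟨i, h1, h2, hnb, rfl⟩ := hx
    exact sr_blkf r a i c h1 h2 hnb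
  | one => intro p; rfl
  | mul x y hx hy ihx ihy =>
    intro p
    simp only [Equiv.Perm.mul_apply]
    rw [ihx (y p), ihy p]
  | inv x hx ihx =>
    intro p
    have := ihx (x⁻¹ p)
    simp only [Equiv.Perm.coe_inv, Equiv.apply_symm_apply] at this
    exact this.symm

-- generation: blkf-preserving permutations lie in WP
lemma blkf_WP (r a : ℕ) (c : ℕ → ℕ) (ha : 1 ≤ a) (hsum : psum c a = r + 1)
    (h : Equiv.Perm (Fin (r+1)))
    (hblk : ∀ p : Fin (r+1), blkf c a ((h p : Fin (r+1)) : ℕ) = blkf c a (p:ℕ)) :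
    h ∈ WP r a c := by
  generalize hN : lenInv h = N
  induction N using Nat.strong_induction_on generalizing h with
  | _ N ih =>
  by_cases hdesc : ∃ p q : Fin (r+1), (q:ℕ) = (p:ℕ) + 1 ∧ ((h q : Fin (r+1)):ℕ) < ((h p : Fin (r+1)):ℕ)
  · obtain ⟨p, q, hq, hd⟩ := hdesc
    set i := (p:ℕ) + 1 with hi
    have hi1 : 1 ≤ i := by omega
    have hi2 : i ≤ r := by have := q.isLt; omega
    have hnb : ∀ j, 1 ≤ j → j ≤ a - 1 → i ≠ psum c j := by
      intro j hj1 hj2 hcon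
      have hbq : j + 1 ≤ blkf c a (q:ℕ) := blkf_ge_of_psum_le c a j (q:ℕ) hj1 hj2 (by omega)
      have hbp : blkf c a (p:ℕ) ≤ j := by
        by_contra hcon2
        push_neg at hcon2
        have hplt : (p:ℕ) < psum c a := by have := p.isLt; omega
        have := (blkf_mem c a (p:ℕ) hplt).1
        have hmono : psum c j ≤ psum c (blkf c a (p:ℕ) - 1) := psum_mono c (by omega)
        omega
      have e1 := hblk p
      have e2 := hblk q
      have e3 : blkf c a ((h q : Fin (r+1)):ℕ) ≤ blkf c a ((h p : Fin (r+1)):ℕ) :=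
        blkf_mono c a (by omega)
      omega
    have hsr : sr r i = Equiv.swap p q := by
      rw [sr, dif_pos ⟨hi1, hi2⟩]
      congr 1 <;> apply Fin.ext <;>
        (first
          | (show i - 1 = (p:ℕ); omega)
          | (show i = (q:ℕ); omega))
    have hgen : sr r i ∈ WP r a c := Subgroup.subset_closure ⟨i, hi1, hi2, hnb, rfl⟩
    have hless : lenInv (h * Equiv.swap p q) < N := by
      rw [← hN]; exact lenInv_descent h p q hq hd
    have hblk' : ∀ m : Fin (r+1),
        blkf c a (((h * Equiv.swap p q) m : Fin (r+1)):ℕ) = blkf c a (m:ℕ) := by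
      intro m
      simp only [Equiv.Perm.mul_apply]
      rw [hblk (Equiv.swap p q m), ← hsr, sr_blkf r a i c hi1 hi2 hnb]
    have hmem := ih (lenInv (h * Equiv.swap p q)) hless (h * Equiv.swap p q) hblk' rfl
    have hfin : h = (h * Equiv.swap p q) * sr r i := by
      rw [hsr, mul_assoc, Equiv.swap_mul_self, mul_one]
    rw [hfin]
    exact Subgroup.mul_mem _ hmem hgen
  · push_neg at hdesc
    have h1 : h = 1 := by
      apply perm_eq_one_of_no_descent
      intro p q hpq
      rcases Nat.lt_or_ge ((h p : Fin (r+1)):ℕ) ((h q : Fin (r+1)):ℕ) with hlt | hge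
      · exact hlt
      · have := hdesc p q hpq
        have hne : h p ≠ h q := by
          intro hcon
          have := h.injective hcon
          rw [this] at hpq
          omega
        have : ((h q : Fin (r+1)):ℕ) ≠ ((h p : Fin (r+1)):ℕ) := by
          intro hcon
          exact hne (Fin.ext hcon.symm)
        omega
    rw [h1]
    exact Subgroup.one_mem _

-- coset equality
lemma cosetOf_eq_of_mem {G : Type*} [Group G] (H : Subgroup G) (g g' : G)
    (hm : g * g'⁻¹ ∈ H) : cosetOf H g = cosetOf H g' := by
  ext x
  constructor
  · rintro ⟨h, hH, rfl⟩
    exact ⟨h * (g * g'⁻¹), H.mul_mem hH hm, by group⟩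
  · rintro ⟨h, hH, rfl⟩
    refine ⟨h * (g * g'⁻¹)⁻¹, H.mul_mem hH (H.inv_mem hm), by group⟩

lemma mem_of_cosetOf_eq {G : Type*} [Group G] (H : Subgroup G) (g g' : G)
    (h : cosetOf H g = cosetOf H g') : g * g'⁻¹ ∈ H := by
  have hg : g ∈ cosetOf H g' := by
    rw [← h]
    exact ⟨1, H.one_mem, (one_mul g).symm⟩
  obtain ⟨h0, hH, hgg⟩ := hg
  have : g * g'⁻¹ = h0 := by rw [hgg]; group
  rw [this]
  exact hH

lemma cosetOf_eq_iff (r a : ℕ) (c : ℕ → ℕ) (ha : 1 ≤ a) (hsum : psum c a = r + 1)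
    (g g' : Equiv.Perm (Fin (r+1))) :
    cosetOf (WP r a c) g = cosetOf (WP r a c) g' ↔
      ∀ p : Fin (r+1), blkf c a ((g p : Fin (r+1)):ℕ) = blkf c a ((g' p : Fin (r+1)):ℕ) := by
  constructor
  · intro h p
    have hm := mem_of_cosetOf_eq _ _ _ h
    have := WP_blkf r a c (g * g'⁻¹) hm (g' p)
    simp only [Equiv.Perm.mul_apply, Equiv.Perm.coe_inv, Equiv.symm_apply_apply] at this
    exact this
  · intro h
    apply cosetOf_eq_of_mem
    apply blkf_WP r a c ha hsum
    intro p
    simp only [Equiv.Perm.mul_apply]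
    rw [h (g'⁻¹ p)]
    simp only [Equiv.Perm.coe_inv, Equiv.apply_symm_apply]

set_option maxHeartbeats 1000000 in
lemma Linj (r : ℕ) (a : ℕ) (ha : 1 ≤ a) : ∀ (c k k' : ℕ → ℕ),
    (∀ j, 1 ≤ j → j ≤ a → 1 ≤ c j) → psum c a ≤ r + 1 →
    (∀ i, psum c 1 ≤ i → i ≤ psum c a - 1 → 1 ≤ k i ∧ k i ≤ i + 1) →
    (∀ j, 2 ≤ j → j ≤ a → ∀ i, psum c (j-1) ≤ i → i + 1 ≤ psum c j - 1 → k i < k (i+1)) →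
    (∀ i, psum c 1 ≤ i → i ≤ psum c a - 1 → 1 ≤ k' i ∧ k' i ≤ i + 1) →
    (∀ j, 2 ≤ j → j ≤ a → ∀ i, psum c (j-1) ≤ i → i + 1 ≤ psum c j - 1 → k' i < k' (i+1)) →
    (∀ p : Fin (r+1), (p:ℕ) < psum c a →
      blkf c a ((tailProd r a c k 2 p : Fin (r+1)):ℕ) =
      blkf c a ((tailProd r a c k' 2 p : Fin (r+1)):ℕ)) →
    ∀ i, psum c 1 ≤ i → i ≤ psum c a - 1 → k i = k' i := by
  induction a, ha using Nat.le_induction with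
  | base =>
    intro c k k' hc hm hkb hkm hkb' hkm' hblk i hi1 hi2
    have : 1 ≤ psum c 1 := by
      have := psum_pred c 1 le_rfl
      have := hc 1 le_rfl le_rfl
      omega
    omega
  | succ n hn ih =>
    intro c k k' hc hm hkb hkm hkb' hkm' hblk
    set a := n + 1 with hadef
    have ha2 : 2 ≤ a := by omega
    set i0 := psum c n with hi0
    set i1 := psum c a - 1 with hi1def
    have hca : 1 ≤ c a := hc a (by omega) le_rfl
    have hpa : psum c a = i0 + c a := by
      have := psum_pred c a (by omega)
      simp only [hadef, Nat.add_sub_cancel] at this ⊢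
      omega
    have hp1 : 1 ≤ psum c 1 := by
      have := psum_pred c 1 le_rfl
      have := hc 1 le_rfl (by omega)
      omega
    have hp1n : psum c 1 ≤ i0 := psum_mono c (by omega)
    have hi01 : i0 ≤ i1 := by omega
    have hi1r : i1 ≤ r := by omega
    -- segment hypotheses
    have hsb : ∀ i, i0 ≤ i → i ≤ i1 → 1 ≤ k i ∧ k i ≤ i + 1 :=
      fun i h1 h2 => hkb i (le_trans hp1n h1) h2
    have hsm : ∀ i, i0 ≤ i → i + 1 ≤ i1 → k i < k (i+1) := by
      intro i h1 h2
      have := hkm a ha2 le_rfl i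
      simp only [hadef, Nat.add_sub_cancel] at this
      exact this h1 h2
    have hsb' : ∀ i, i0 ≤ i → i ≤ i1 → 1 ≤ k' i ∧ k' i ≤ i + 1 :=
      fun i h1 h2 => hkb' i (le_trans hp1n h1) h2
    have hsm' : ∀ i, i0 ≤ i → i + 1 ≤ i1 → k' i < k' (i+1) := by
      intro i h1 h2
      have := hkm' a ha2 le_rfl i
      simp only [hadef, Nat.add_sub_cancel] at this
      exact this h1 h2
    obtain ⟨sa, sb, sc⟩ := seg r i0 k (i1 + 1 - i0) i1 rfl hi1r hsb hsm
    obtain ⟨sa', sb', sc'⟩ := seg r i0 k' (i1 + 1 - i0) i1 rfl hi1r hsb' hsm'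
    -- peel
    have hpeel : tailProd r a c k 2 = tailProd r n c k 2 * cycProd r k i0 i1 := by
      have := tailProd_concat r a c k ha2
      simp only [hadef, Nat.add_sub_cancel] at this
      exact this
    have hpeel' : tailProd r a c k' 2 = tailProd r n c k' 2 * cycProd r k' i0 i1 := by
      have := tailProd_concat r a c k' ha2
      simp only [hadef, Nat.add_sub_cancel] at this
      exact this
    have hcn : ∀ j, 1 ≤ j → j ≤ n → 1 ≤ c j := fun j h1 h2 => hc j h1 (by omega)
    have hufix : ∀ p : Fin (r+1), i0 ≤ (p:ℕ) → tailProd r n c k 2 p = p :=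
      fun p hp => tailProd_fix r n c k hcn p hp
    have hufix' : ∀ p : Fin (r+1), i0 ≤ (p:ℕ) → tailProd r n c k' 2 p = p :=
      fun p hp => tailProd_fix r n c k' hcn p hp
    -- each k-value appears among k'-values
    have hset : ∀ i, i0 ≤ i → i ≤ i1 → ∃ i', i0 ≤ i' ∧ i' ≤ i1 ∧ k i = k' i' := by
      intro i hia hib
      have hki := hsb i hia hib
      have hPlt : k i - 1 < r + 1 := by omega
      set P : Fin (r+1) := ⟨k i - 1, hPlt⟩ with hP
      have hPval : (P:ℕ) = k i - 1 := rfl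
      have hva : ((cycProd r k i0 i1 P : Fin (r+1)):ℕ) = i := sa P i hia hib hPval
      have hwk : ((tailProd r a c k 2 P : Fin (r+1)):ℕ) = i := by
        rw [hpeel]
        simp only [Equiv.Perm.mul_apply]
        rw [hufix (cycProd r k i0 i1 P) (by omega), hva]
      have hblkP := hblk P (by omega)
      have hba : blkf c a ((tailProd r a c k 2 P : Fin (r+1)):ℕ) = a := by
        rw [hwk, blkf_eq_a_iff c a i (by omega)]
        simp only [hadef, Nat.add_sub_cancel]
        omega
      by_contra hcon
      push_neg at hcon
      have hnotin : ∀ i', i0 ≤ i' → i' ≤ i1 → (P:ℕ) ≠ k' i' - 1 := by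
        intro i' h1 h2 heq
        have hk'i := hsb' i' h1 h2
        exact absurd (by omega : k i = k' i') (hcon i' h1 h2)
      have hvb := sb' P (by omega) hnotin
      have hwk' : ((tailProd r a c k' 2 P : Fin (r+1)):ℕ) < i0 := by
        rw [hpeel']
        simp only [Equiv.Perm.mul_apply]
        exact perm_lt (tailProd r n c k' 2) hufix' (cycProd r k' i0 i1 P) hvb
      rw [hblkP, blkf_eq_a_iff c a _ (by omega)] at hba
      rw [show a - 1 = n by omega] at hba
      omega
    have hset' : ∀ i, i0 ≤ i → i ≤ i1 → ∃ i', i0 ≤ i' ∧ i' ≤ i1 ∧ k' i = k i' := by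
      intro i hia hib
      have hki := hsb' i hia hib
      have hPlt : k' i - 1 < r + 1 := by omega
      set P : Fin (r+1) := ⟨k' i - 1, hPlt⟩ with hP
      have hPval : (P:ℕ) = k' i - 1 := rfl
      have hva : ((cycProd r k' i0 i1 P : Fin (r+1)):ℕ) = i := sa' P i hia hib rfl
      have hwk : ((tailProd r a c k' 2 P : Fin (r+1)):ℕ) = i := by
        rw [hpeel']
        simp only [Equiv.Perm.mul_apply]
        rw [hufix' (cycProd r k' i0 i1 P) (by omega), hva]
      have hblkP := hblk P (by omega)
      have hba : blkf c a ((tailProd r a c k' 2 P : Fin (r+1)):ℕ) = a := by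
        rw [hwk, blkf_eq_a_iff c a i (by omega)]
        simp only [hadef, Nat.add_sub_cancel]
        omega
      by_contra hcon
      push_neg at hcon
      have hnotin : ∀ i', i0 ≤ i' → i' ≤ i1 → (P:ℕ) ≠ k i' - 1 := by
        intro i' h1 h2 heq
        have hki' := hsb i' h1 h2
        exact absurd (by omega : k' i = k i') (hcon i' h1 h2)
      have hvb := sb P (by omega) hnotin
      have hwk2 : ((tailProd r a c k 2 P : Fin (r+1)):ℕ) < i0 := by
        rw [hpeel]
        simp only [Equiv.Perm.mul_apply]
        exact perm_lt (tailProd r n c k 2) hufix (cycProd r k i0 i1 P) hvb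
      rw [← hblkP, blkf_eq_a_iff c a _ (by omega)] at hba
      rw [show a - 1 = n by omega] at hba
      omega
    -- strict monotonicity chains
    have hch : ∀ j i, i0 ≤ i → i < j → j ≤ i1 → k i < k j := kchain k i0 i1 hsm
    have hch' : ∀ j i, i0 ≤ i → i < j → j ≤ i1 → k' i < k' j := kchain k' i0 i1 hsm'
    -- agreement on top segment
    have hagree : ∀ i, i0 ≤ i → i ≤ i1 → k i = k' i := by
      intro i
      induction i using Nat.strong_induction_on with
      | _ i ihh =>
        intro hia hib
        obtain ⟨j1, hj1a, hj1b, hj1⟩ := hset i hia hib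
        rcases Nat.lt_trichotomy j1 i with hlt | heq | hgt
        · exfalso
          have := ihh j1 hlt hj1a hj1b
          have : k i = k j1 := by omega
          have := hch i j1 hj1a hlt hib
          omega
        · rw [heq] at hj1; exact hj1
        · exfalso
          have hk1 : k' i < k i := by
            have := hch' j1 i hia hgt hj1b
            omega
          obtain ⟨j2, hj2a, hj2b, hj2⟩ := hset' i hia hib
          rcases Nat.lt_trichotomy j2 i with hlt2 | heq2 | hgt2
          · have := ihh j2 hlt2 hj2a hj2b
            have : k' i = k' j2 := by omega
            have := hch' i j2 hj2a hlt2 hib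
            omega
          · rw [heq2] at hj2; omega
          · have := hch j2 i hia hgt2 hj2b
            omega
    -- same segment permutation
    have hveq : cycProd r k i0 i1 = cycProd r k' i0 i1 := cycProd_congr r k k' i0 i1 hagree
    -- blkf equality descends to level n
    have hblkn : ∀ p : Fin (r+1), (p:ℕ) < psum c n →
        blkf c n ((tailProd r n c k 2 p : Fin (r+1)):ℕ) =
        blkf c n ((tailProd r n c k' 2 p : Fin (r+1)):ℕ) := by
      intro q hq
      set P := (cycProd r k i0 i1)⁻¹ q with hPdef
      have hvP : cycProd r k i0 i1 P = q := by
        rw [hPdef]; simp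
      have hPle : (P:ℕ) ≤ i1 := by
        by_contra hcon
        push_neg at hcon
        have := cycProd_fix r k i0 i1 P hcon
        rw [this] at hvP
        rw [hvP] at hcon
        omega
      have hblkP := hblk P (by omega)
      rw [hpeel, hpeel'] at hblkP
      simp only [Equiv.Perm.mul_apply] at hblkP
      rw [hvP] at hblkP
      rw [← hveq, hvP] at hblkP
      have h1 : ((tailProd r n c k 2 q : Fin (r+1)):ℕ) < i0 := perm_lt _ hufix q hq
      have h2 : ((tailProd r n c k' 2 q : Fin (r+1)):ℕ) < i0 := perm_lt _ hufix' q hq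
      rw [blkf_trunc c a _ ha2 (by simpa [hadef] using h1),
          blkf_trunc c a _ ha2 (by simpa [hadef] using h2)] at hblkP
      simpa [hadef] using hblkP
    -- apply IH
    have hIH := ih c k k' hcn (by omega)
      (fun i h1 h2 => hkb i h1 (by omega))
      (fun j h1 h2 i => hkm j h1 (by omega) i)
      (fun i h1 h2 => hkb' i h1 (by omega))
      (fun j h1 h2 i => hkm' j h1 (by omega) i)
      hblkn
    intro i hia hib
    rcases Nat.lt_or_ge i i0 with hlt | hge
    · exact hIH i hia (by omega)
    · exact hagree i hge hib

set_option maxHeartbeats 1600000 in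
lemma Lsurj (r : ℕ) (a : ℕ) (ha : 1 ≤ a) : ∀ (c : ℕ → ℕ) (f : Fin (r+1) → ℕ),
    (∀ j, 1 ≤ j → j ≤ a → 1 ≤ c j) → psum c a ≤ r + 1 →
    (∀ p : Fin (r+1), (p:ℕ) < psum c a → 1 ≤ f p ∧ f p ≤ a) →
    (∀ j, 1 ≤ j → j ≤ a →
      (Finset.univ.filter (fun p : Fin (r+1) => (p:ℕ) < psum c a ∧ f p = j)).card = c j) →
    ∃ k : ℕ → ℕ,
      (∀ i, psum c 1 ≤ i → i ≤ psum c a - 1 → 1 ≤ k i ∧ k i ≤ i + 1) ∧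
      (∀ j, 2 ≤ j → j ≤ a → ∀ i, psum c (j-1) ≤ i → i + 1 ≤ psum c j - 1 → k i < k (i+1)) ∧
      (∀ i, i < psum c 1 ∨ psum c a - 1 < i → k i = 0) ∧
      (∀ p : Fin (r+1), (p:ℕ) < psum c a →
        blkf c a ((tailProd r a c k 2 p : Fin (r+1)):ℕ) = f p) := by
  induction a, ha using Nat.le_induction with
  | base =>
    intro c f hc hm hf1 hf2
    have hp1 : 1 ≤ psum c 1 := by
      have := psum_pred c 1 le_rfl
      have := hc 1 le_rfl le_rfl
      omega
    refine ⟨fun _ => 0, ?_, ?_, ?_, ?_⟩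
    · intro i h1 h2; omega
    · intro j h1 h2; omega
    · intro i _; rfl
    · intro p hp
      rw [tailProd_one]
      simp only [Equiv.Perm.one_apply]
      rw [blkf_one]
      have := hf1 p hp
      omega
  | succ n hn ih =>
    intro c f hc hm hf1 hf2
    set a := n + 1 with hadef
    have ha2 : 2 ≤ a := by omega
    set i0 := psum c n with hi0
    set i1 := psum c a - 1 with hi1def
    have hca : 1 ≤ c a := hc a (by omega) le_rfl
    have hpa : psum c a = i0 + c a := by
      have := psum_pred c a (by omega)
      simp only [hadef, Nat.add_sub_cancel] at this ⊢
      omega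
    have hp1 : 1 ≤ psum c 1 := by
      have := psum_pred c 1 le_rfl
      have := hc 1 le_rfl (by omega)
      omega
    have hp1n : psum c 1 ≤ i0 := psum_mono c (by omega)
    have hi01 : i0 ≤ i1 := by omega
    have hi1r : i1 ≤ r := by omega
    have hcn : ∀ j, 1 ≤ j → j ≤ n → 1 ≤ c j := fun j h1 h2 => hc j h1 (by omega)
    -- the fiber of the top block
    set T := Finset.univ.filter (fun p : Fin (r+1) => (p:ℕ) < psum c a ∧ f p = a) with hT
    have hTcard : T.card = c a := hf2 a (by omega) le_rfl
    set e := T.orderEmbOfFin hTcard with he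
    have hmemT : ∀ t : Fin (c a), e t ∈ T := fun t => Finset.orderEmbOfFin_mem T hTcard t
    have hmemT' : ∀ t : Fin (c a), ((e t : Fin (r+1)):ℕ) < psum c a ∧ f (e t) = a := by
      intro t
      have := hmemT t
      rw [hT, Finset.mem_filter] at this
      exact this.2
    have hsurjT : ∀ p : Fin (r+1), p ∈ T → ∃ t : Fin (c a), e t = p := by
      intro p hp
      have : p ∈ Set.range e := by
        rw [he, Finset.range_orderEmbOfFin]
        exact hp
      obtain ⟨t, ht⟩ := this
      exact ⟨t, ht⟩
    have hemono : StrictMono e := e.strictMono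
    -- low bound : t ≤ e t
    have hlow : ∀ m : ℕ, ∀ t : Fin (c a), (t:ℕ) ≤ m → (t:ℕ) ≤ ((e t : Fin (r+1)):ℕ) := by
      intro m
      induction m with
      | zero => intro t ht; omega
      | succ m ihm =>
        intro t ht
        rcases Nat.lt_or_ge (t:ℕ) (m+1) with hlt | hge
        · exact ihm t (by omega)
        · have htv : (t:ℕ) = m + 1 := by omega
          have hmlt : m < c a := by omega
          have hv2 : ((⟨m, hmlt⟩ : Fin (c a)) : ℕ) = m := rfl
          have h1 := ihm ⟨m, hmlt⟩ (le_of_eq hv2)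
          have h2 : e ⟨m, hmlt⟩ < e t := hemono (by rw [Fin.lt_def, hv2]; omega)
          rw [Fin.lt_def] at h2
          omega
    -- high bound : e t ≤ i0 + t
    have hhighaux : ∀ d : ℕ, ∀ t : Fin (c a), (t:ℕ) + d = c a - 1 →
        ((e t : Fin (r+1)):ℕ) + d ≤ i1 := by
      intro d
      induction d with
      | zero =>
        intro t ht
        have := (hmemT' t).1
        omega
      | succ d ihd =>
        intro t ht
        have htlt : (t:ℕ) + 1 < c a := by omega
        have h1 := ihd ⟨(t:ℕ)+1, htlt⟩ (by simp; omega)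
        have h2 : e t < e ⟨(t:ℕ)+1, htlt⟩ := hemono (by rw [Fin.lt_def]; simp)
        rw [Fin.lt_def] at h2
        omega
    have hhigh : ∀ t : Fin (c a), ((e t : Fin (r+1)):ℕ) ≤ i0 + t := by
      intro t
      have := hhighaux (c a - 1 - (t:ℕ)) t (by omega)
      omega
    -- the segment tuple
    set k0 : ℕ → ℕ := fun i => if h : i - i0 < c a
      then ((e ⟨i - i0, h⟩ : Fin (r+1)) : ℕ) + 1 else 0 with hk0
    have hk0val : ∀ i, i0 ≤ i → i ≤ i1 → ∀ (h : i - i0 < c a),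
        k0 i = ((e ⟨i - i0, h⟩ : Fin (r+1)) : ℕ) + 1 := by
      intro i h1 h2 h3
      rw [hk0]
      simp only [dif_pos h3]
    have hseglt : ∀ i, i0 ≤ i → i ≤ i1 → i - i0 < c a := by intro i h1 h2; omega
    have hk0b : ∀ i, i0 ≤ i → i ≤ i1 → 1 ≤ k0 i ∧ k0 i ≤ i + 1 := by
      intro i h1 h2
      have h3 := hseglt i h1 h2
      rw [hk0val i h1 h2 h3]
      have := hhigh ⟨i - i0, h3⟩
      have hv : ((⟨i - i0, h3⟩ : Fin (c a)) : ℕ) = i - i0 := rfl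
      omega
    have hk0m : ∀ i, i0 ≤ i → i + 1 ≤ i1 → k0 i < k0 (i+1) := by
      intro i h1 h2
      have h3 := hseglt i h1 (by omega)
      have h4 := hseglt (i+1) (by omega) h2
      rw [hk0val i h1 (by omega) h3, hk0val (i+1) (by omega) h2 h4]
      have := hemono (show (⟨i - i0, h3⟩ : Fin (c a)) < ⟨i + 1 - i0, h4⟩ by
        rw [Fin.lt_def]; simp; omega)
      rw [Fin.lt_def] at this
      omega
    obtain ⟨sa, sb, sc⟩ := seg r i0 k0 (i1 + 1 - i0) i1 rfl hi1r hk0b hk0m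
    set v := cycProd r k0 i0 i1 with hv
    -- p ∉ T avoids all k0-values
    have hnotT : ∀ p : Fin (r+1), p ∉ T → ∀ i, i0 ≤ i → i ≤ i1 → (p:ℕ) ≠ k0 i - 1 := by
      intro p hp i h1 h2 hcon
      have h3 := hseglt i h1 h2
      rw [hk0val i h1 h2 h3] at hcon
      have : p = e ⟨i - i0, h3⟩ := Fin.ext (by omega)
      rw [this] at hp
      exact hp (hmemT ⟨i - i0, h3⟩)
    -- v⁻¹ of low points
    have hvinv : ∀ q : Fin (r+1), (q:ℕ) < i0 →
        ((v⁻¹ q : Fin (r+1)):ℕ) ≤ i1 ∧ v⁻¹ q ∉ T := by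
      intro q hq
      have hvq : v (v⁻¹ q) = q := by simp
      have hle : ((v⁻¹ q : Fin (r+1)):ℕ) ≤ i1 := by
        by_contra hcon
        push_neg at hcon
        have := cycProd_fix r k0 i0 i1 (v⁻¹ q) hcon
        rw [hv] at hvq
        rw [this] at hvq
        rw [hvq] at hcon
        omega
      refine ⟨hle, ?_⟩
      intro hmem
      obtain ⟨t, ht⟩ := hsurjT _ hmem
      have h3 : i0 + (t:ℕ) ≤ i1 := by have := (hmemT' t).1; have := hhigh t; omega
      have hval : ((v⁻¹ q : Fin (r+1)):ℕ) = k0 (i0 + (t:ℕ)) - 1 := by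
        have h4 := hseglt (i0 + t) (by omega) h3
        rw [hk0val (i0 + t) (by omega) h3 h4]
        have : (⟨i0 + (t:ℕ) - i0, h4⟩ : Fin (c a)) = t := Fin.ext (by simp)
        rw [this, ← ht]
        omega
      have := sa (v⁻¹ q) (i0 + (t:ℕ)) (by omega) h3 hval
      rw [hvq] at this
      omega
    -- the truncated fiber function
    set f' : Fin (r+1) → ℕ := fun q => f (v⁻¹ q) with hf'
    have hf1' : ∀ q : Fin (r+1), (q:ℕ) < psum c n → 1 ≤ f' q ∧ f' q ≤ n := by
      intro q hq
      have hq0 : (q:ℕ) < i0 := hq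
      obtain ⟨hle, hnot⟩ := hvinv q hq0
      have hlt : ((v⁻¹ q : Fin (r+1)):ℕ) < psum c a := by omega
      have := hf1 (v⁻¹ q) hlt
      have hne : f (v⁻¹ q) ≠ a := by
        intro hcon
        apply hnot
        rw [hT, Finset.mem_filter]
        exact ⟨Finset.mem_univ _, hlt, hcon⟩
      show 1 ≤ f (v⁻¹ q) ∧ f (v⁻¹ q) ≤ n
      omega
    have hf2' : ∀ j, 1 ≤ j → j ≤ n →
        (Finset.univ.filter (fun q : Fin (r+1) => (q:ℕ) < psum c n ∧ f' q = j)).card = c j := by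
      intro j hj1 hj2
      rw [← hf2 j hj1 (by omega)]
      apply Finset.card_bij' (fun q _ => v⁻¹ q) (fun p _ => v p)
      · intro q hq
        rw [Finset.mem_filter] at hq ⊢
        obtain ⟨_, hq1, hq2⟩ := hq
        obtain ⟨hle, _⟩ := hvinv q hq1
        exact ⟨Finset.mem_univ _, by omega, hq2⟩
      · intro p hp
        rw [Finset.mem_filter] at hp ⊢
        obtain ⟨_, hp1, hp2⟩ := hp
        have hpnotT : p ∉ T := by
          intro hmem
          rw [hT, Finset.mem_filter] at hmem
          omega
        have hvp := sb p (by omega) (hnotT p hpnotT)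
        refine ⟨Finset.mem_univ _, hvp, ?_⟩
        show f (v⁻¹ (v p)) = j
        rw [Equiv.Perm.coe_inv, Equiv.symm_apply_apply]
        exact hp2
      · intro q _; simp
      · intro p _; simp
    -- apply IH
    obtain ⟨k'', hb'', hm'', hz'', hw''⟩ := ih c f' hcn (by omega) hf1' hf2'
    -- merge
    set k : ℕ → ℕ := fun i => if i0 ≤ i ∧ i ≤ i1 then k0 i else k'' i with hk
    have hkseg : ∀ i, i0 ≤ i → i ≤ i1 → k i = k0 i := by
      intro i h1 h2; rw [hk]; simp only [if_pos (And.intro h1 h2)]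
    have hkout : ∀ i, ¬(i0 ≤ i ∧ i ≤ i1) → k i = k'' i := by
      intro i h1; rw [hk]; simp only [if_neg h1]
    have hveq : cycProd r k i0 i1 = v := by
      rw [hv]
      exact cycProd_congr r k k0 i0 i1 (fun t h1 h2 => hkseg t h1 h2)
    have hueq : tailProd r n c k 2 = tailProd r n c k'' 2 := by
      apply tailProd_congr r n c k k'' _ (psum_mono c)
      intro t ht
      apply hkout
      omega
    have hpeel : tailProd r a c k 2 = tailProd r n c k 2 * cycProd r k i0 i1 := by
      have := tailProd_concat r a c k ha2
      simp only [hadef, Nat.add_sub_cancel] at this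
      exact this
    have hufix : ∀ p : Fin (r+1), i0 ≤ (p:ℕ) → tailProd r n c k'' 2 p = p :=
      fun p hp => tailProd_fix r n c k'' hcn p hp
    have hwdec : ∀ p : Fin (r+1), tailProd r a c k 2 p = tailProd r n c k'' 2 (v p) := by
      intro p
      rw [hpeel]
      simp only [Equiv.Perm.mul_apply]
      rw [hveq, hueq]
    refine ⟨k, ?_, ?_, ?_, ?_⟩
    · -- bounds
      intro i h1 h2
      rcases Nat.lt_or_ge i i0 with hlt | hge
      · rw [hkout i (by omega)]
        have := hb'' i h1 (by omega)
        exact this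
      · rw [hkseg i hge h2]
        exact hk0b i hge h2
    · -- monotonicity
      intro j hj1 hj2 i hia hib
      rcases Nat.eq_or_lt_of_le hj2 with hje | hjl
      · -- j = a
        have hia' : i0 ≤ i := by
          rw [show j - 1 = n by omega] at hia
          exact hia
        have hib' : i + 1 ≤ i1 := by
          rw [hje] at hib
          omega
        rw [hkseg i hia' (by omega), hkseg (i+1) (by omega) hib']
        exact hk0m i hia' hib'
      · -- j ≤ n
        have hjn : j ≤ n := by omega
        have hps : psum c j ≤ i0 := psum_mono c hjn
        have h1 : k i = k'' i := hkout i (by omega)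
        have h2 : k (i+1) = k'' (i+1) := hkout (i+1) (by omega)
        rw [h1, h2]
        exact hm'' j hj1 hjn i hia hib
    · -- zero outside
      intro i hi
      rcases hi with hi | hi
      · rw [hkout i (by omega)]
        exact hz'' i (Or.inl hi)
      · rw [hkout i (by omega)]
        exact hz'' i (Or.inr (by omega))
    · -- the block values
      intro p hp
      rw [hwdec p]
      by_cases hmem : p ∈ T
      · obtain ⟨t, ht⟩ := hsurjT p hmem
        have h3 : i0 + (t:ℕ) ≤ i1 := by have := (hmemT' t).1; have := hhigh t; omega
        have h4 := hseglt (i0 + t) (by omega) h3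
        have hval : (p:ℕ) = k0 (i0 + (t:ℕ)) - 1 := by
          rw [hk0val (i0 + t) (by omega) h3 h4]
          have : (⟨i0 + (t:ℕ) - i0, h4⟩ : Fin (c a)) = t := Fin.ext (by simp)
          rw [this, ← ht]
          omega
        have hvp := sa p (i0 + (t:ℕ)) (by omega) h3 hval
        have hfix := hufix (v p) (by omega)
        rw [hfix]
        have hfp : f p = a := by rw [← ht]; exact (hmemT' t).2
        rw [hfp, blkf_eq_a_iff c a _ (by omega), show a - 1 = n by omega]
        omega
      · have hvp := sb p (by omega) (hnotT p hmem)
        have hlow2 : ((tailProd r n c k'' 2 (v p) : Fin (r+1)):ℕ) < i0 :=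
          perm_lt _ hufix (v p) hvp
        rw [blkf_trunc c a _ ha2 (by rw [show a - 1 = n by omega]; omega),
          show a - 1 = n by omega]
        rw [hw'' (v p) (by omega)]
        show f (v⁻¹ (v p)) = f p
        rw [Equiv.Perm.coe_inv, Equiv.symm_apply_apply]

/-- the map `D_{(r_1 ⋯ r_a)} → W(P)\S_{r+1}`,
`(k_{x_1}, …, k_r) ↦ W(P) · (Π_2 ⋯ Π_a)`, is a bijection onto the set of left
cosets of `W(P)`.  (Tuples are encoded as functions `ℕ → ℕ` vanishing outside
the index range `[x_1, r]`.) -/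
theorem stmt4 (r a : ℕ) (hr : 1 ≤ r) (ha : 1 ≤ a) (c : ℕ → ℕ)
    (hc : ∀ j, 1 ≤ j → j ≤ a → 1 ≤ c j) (hcsum : psum c a = r + 1) :
    Set.BijOn (fun k : ℕ → ℕ => cosetOf (WP r a c) (tailProd r a c k 2))
      {k : ℕ → ℕ |
        (∀ i, psum c 1 ≤ i → i ≤ r → 1 ≤ k i ∧ k i ≤ i + 1) ∧
        (∀ j, 2 ≤ j → j ≤ a → ∀ i, psum c (j - 1) ≤ i → i + 1 ≤ psum c j - 1 →
          k i < k (i + 1)) ∧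
        (∀ i, i < psum c 1 ∨ r < i → k i = 0)}
      {S | ∃ g, S = cosetOf (WP r a c) g} := by
  have hrr : r = psum c a - 1 := by omega
  refine ⟨?_, ?_, ?_⟩
  · -- MapsTo
    intro k _
    exact ⟨tailProd r a c k 2, rfl⟩
  · -- InjOn
    intro k hk k' hk' heq
    obtain ⟨hkb, hkm, hkz⟩ := hk
    obtain ⟨hkb', hkm', hkz'⟩ := hk'
    simp only at heq
    rw [cosetOf_eq_iff r a c ha hcsum] at heq
    have hinj := Linj r a ha c k k' hc (by omega)
      (fun i h1 h2 => hkb i h1 (by omega))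
      hkm
      (fun i h1 h2 => hkb' i h1 (by omega))
      hkm'
      (fun p _ => heq p)
    funext i
    rcases Nat.lt_or_ge i (psum c 1) with h1 | h1
    · rw [hkz i (Or.inl h1), hkz' i (Or.inl h1)]
    rcases Nat.lt_or_ge r i with h2 | h2
    · rw [hkz i (Or.inr h2), hkz' i (Or.inr h2)]
    · exact hinj i h1 (by omega)
  · -- SurjOn
    rintro S ⟨g, rfl⟩
    set f : Fin (r+1) → ℕ := fun p => blkf c a ((g p : Fin (r+1)):ℕ) with hfdef
    have hf1 : ∀ p : Fin (r+1), (p:ℕ) < psum c a → 1 ≤ f p ∧ f p ≤ a :=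
      fun p _ => ⟨blkf_pos c a _, blkf_le c a _ ha⟩
    have hcount : ∀ j, 1 ≤ j → j ≤ a →
        (Finset.univ.filter (fun q : Fin (r+1) => (q:ℕ) < psum c a ∧ blkf c a (q:ℕ) = j)).card
          = c j := by
      intro j hj1 hj2
      have hpj : psum c j ≤ r + 1 := by
        have := psum_mono c hj2
        omega
      have hstep : psum c j = psum c (j-1) + c j := psum_pred c j hj1
      rw [show c j = (Finset.Ico (psum c (j-1)) (psum c j)).card by rw [Nat.card_Ico]; omega]
      refine Finset.card_bij' (fun q _ => (q:ℕ))
        (fun m hm => (⟨m, ?_⟩ : Fin (r+1))) ?_ ?_ ?_ ?_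
      · simp only [Finset.mem_Ico] at hm
        omega
      · intro q hq
        simp only [Finset.mem_filter, Finset.mem_univ, true_and] at hq
        simp only [Finset.mem_Ico]
        have := blkf_mem c a (q:ℕ) hq.1
        rw [hq.2] at this
        exact this
      · intro m hm
        simp only [Finset.mem_Ico] at hm
        simp only [Finset.mem_filter, Finset.mem_univ, true_and]
        constructor
        · show m < psum c a
          omega
        · show blkf c a m = j
          exact blkf_of_mem c a j m hj1 hj2 hm.1 hm.2
      · intro q _; rfl
      · intro m _; rfl
    have hf2 : ∀ j, 1 ≤ j → j ≤ a →
        (Finset.univ.filter (fun p : Fin (r+1) => (p:ℕ) < psum c a ∧ f p = j)).card = c j := by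
      intro j hj1 hj2
      rw [← hcount j hj1 hj2]
      apply Finset.card_bij' (fun p _ => g p) (fun q _ => g⁻¹ q)
      · intro p hp
        simp only [Finset.mem_filter, Finset.mem_univ, true_and] at hp ⊢
        have : ((g p : Fin (r+1)):ℕ) < r + 1 := (g p).isLt
        exact ⟨by omega, hp.2⟩
      · intro q hq
        simp only [Finset.mem_filter, Finset.mem_univ, true_and] at hq ⊢
        have : ((g⁻¹ q : Fin (r+1)):ℕ) < r + 1 := (g⁻¹ q).isLt
        refine ⟨by omega, ?_⟩
        show blkf c a ((g (g⁻¹ q) : Fin (r+1)):ℕ) = j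
        rw [Equiv.Perm.coe_inv, Equiv.apply_symm_apply]
        exact hq.2
      · intro p _; simp
      · intro q _; simp
    obtain ⟨k, hkb, hkm, hkz, hkw⟩ := Lsurj r a ha c f hc (by omega) hf1 hf2
    refine ⟨k, ⟨?_, ?_, ?_⟩, ?_⟩
    · intro i h1 h2; exact hkb i h1 (by omega)
    · exact hkm
    · intro i hi
      apply hkz
      omega
    · simp only
      rw [cosetOf_eq_iff r a c ha hcsum]
      intro p
      exact hkw p (by omega)
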